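/- Let d and r₂ be positive integers, k ∈ ℤ_{++}^{r₂}, and let R be the unique polynomial in ℂ[X] with R · ∏_{1≤i<j≤r₂+1}(X − d(i+j−3)/4)_{k_i+k_j} = (X)_{φ₁(k),d} · ∏_{1≤i<j≤r₂}(X − d(i+j−2)/4)_{k_i+k_j}. Suppose 2 ≤ m₁ ≤ m₂ ≤ r₂, k₂ = ⋯ = k_{m₁}, and k_{m₂+1} = 0 (convention k_{r₂+1} = 0). Then every zero λ ∈ ℂ of R is real and: if k₁ > k₂ > 0 then (d/4)(m₁−1) − (k₁+k₂) + 1 ≤ λ ≤ (d/4)(2m₂−3) − k_{m₂−1}; if k₁ = k₂ > 0 then (d/4)(2⌈m₁/2⌉−1) − (k₁+k₂) + 1 ≤ λ ≤ (d/4)(2m₂−3) − k_{m₂−1}; and if k₂ = 0 then R is the constant polynomial 1. Moreover, for m = 1, …, r₂−1, if φ₁(k)_{m+1} = 0 and φ₁(k)_m ≠ 0, then at λ = dm/2 the numerator ∏_{1≤i<j≤r₂}(λ − d(i+j−2)/4)_{k_i+k_j} and the denominator ∏_{1≤i<j≤r₂+1}(λ − d(i+j−3)/4)_{k_i+k_j}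 of C₁^{d,d/2} vanish to the same order (C₁^{d,d/2} is nonzero holomorphic there), while at λ = d(m−1)/2 the denominator vanishes to strictly higher order than the numerator (C₁^{d,d/2} has a pole there). -/
import Mathlib


open Polynomial Finset

/-- `(X - c)_m := ∏_{t=0}^{m-1} (X - c + t)` in `ℂ[X]`. -/
noncomputable def pochPoly (c : ℂ) (m : ℕ) : Polynomial ℂ :=
  ∏ t ∈ Finset.range m, (Polynomial.X - Polynomial.C c + (t : Polynomial ℂ))

/-- `φ₁(k)_a := min{k_i + k_j : 1 ≤ i < j ≤ r₂+1, i+j = 2a+1}`. -/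
noncomputable def phi1 (r₂ : ℕ) (k : ℕ → ℕ) (a : ℕ) : ℕ :=
  sInf {m : ℕ | ∃ i j : ℕ, 1 ≤ i ∧ i < j ∧ j ≤ r₂ + 1 ∧ i + j = 2 * a + 1 ∧
    m = k i + k j}

/-- The denominator `∏_{1≤i<j≤r₂+1}(X − d(i+j−3)/4)_{k_i+k_j}` of `C₁^{d,d/2}`. -/
noncomputable def denom1 (d r₂ : ℕ) (k : ℕ → ℕ) : Polynomial ℂ :=
  ∏ i ∈ Finset.Icc 1 (r₂ + 1), ∏ j ∈ Finset.Icc (i + 1) (r₂ + 1),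
    pochPoly ((d : ℂ) * ((i : ℂ) + (j : ℂ) - 3) / 4) (k i + k j)

/-- The numerator `∏_{1≤i<j≤r₂}(X − d(i+j−2)/4)_{k_i+k_j}` of `C₁^{d,d/2}`. -/
noncomputable def numer1 (d r₂ : ℕ) (k : ℕ → ℕ) : Polynomial ℂ :=
  ∏ i ∈ Finset.Icc 1 r₂, ∏ j ∈ Finset.Icc (i + 1) r₂,
    pochPoly ((d : ℂ) * ((i : ℂ) + (j : ℂ) - 2) / 4) (k i + k j)

/-- The polynomial `(X)_{φ₁(k),d} = ∏_{a=1}^{r₂}(X − d(a−1)/2)_{φ₁(k)_a}`. -/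
noncomputable def phiPoly1 (d r₂ : ℕ) (k : ℕ → ℕ) : Polynomial ℂ :=
  ∏ a ∈ Finset.Icc 1 r₂,
    pochPoly ((d : ℂ) * ((a : ℂ) - 1) / 2) (phi1 r₂ k a)

lemma pochPoly_eq (c : ℂ) (n : ℕ) :
    pochPoly c n = ∏ t ∈ Finset.range n, (X - C (c - (t : ℂ))) := by
  unfold pochPoly
  refine Finset.prod_congr rfl fun t _ => ?_
  simp [Polynomial.C_sub]
  ring

lemma pochPoly_ne_zero (c : ℂ) (n : ℕ) : pochPoly c n ≠ 0 := by
  rw [pochPoly_eq]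
  exact Finset.prod_ne_zero_iff.mpr fun t _ => Polynomial.X_sub_C_ne_zero _

lemma pochPoly_fill (c : ℂ) {m n : ℕ} (h : m ≤ n) :
    pochPoly c m * ∏ t ∈ Finset.Ico m n, (X - C (c - (t : ℂ))) = pochPoly c n := by
  simp only [pochPoly_eq, Finset.range_eq_Ico]
  exact Finset.prod_Ico_consecutive _ (Nat.zero_le m) h

lemma rm_prod {ι : Type*} (s : Finset ι) (f : ι → Polynomial ℂ)
    (hf : ∀ i ∈ s, f i ≠ 0) (z : ℂ) :
    rootMultiplicity z (∏ i ∈ s, f i) = ∑ i ∈ s, rootMultiplicity z (f i) := by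
  classical
  induction s using Finset.cons_induction with
  | empty =>
      rw [Finset.prod_empty, Finset.sum_empty,
        Polynomial.rootMultiplicity_eq_zero (p := (1 : Polynomial ℂ)) (by simp [Polynomial.IsRoot])]
  | cons a s ha ih =>
      rw [Finset.prod_cons, Finset.sum_cons,
        Polynomial.rootMultiplicity_mul
          (mul_ne_zero (hf a (Finset.mem_cons_self a s))
            (Finset.prod_ne_zero_iff.mpr fun i hi => hf i (Finset.mem_cons_of_mem hi))),
        ih fun i hi => hf i (Finset.mem_cons_of_mem hi)]

noncomputable def DiagP (d r₂ : ℕ) (k : ℕ → ℕ) : Polynomial ℂ :=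
  ∏ a ∈ Finset.Icc 1 r₂, pochPoly ((d : ℂ) * ((a : ℂ) - 1) / 2) (k a + k (a + 1))

noncomputable def ngRoot (d : ℕ) (p : Σ _ : ℕ, Σ _ : ℕ, ℕ) : ℂ :=
  (d : ℂ) * ((p.1 : ℂ) + (p.2.1 : ℂ) - 2) / 4 - (p.2.2 : ℂ)

noncomputable def Sng (r₂ : ℕ) (k : ℕ → ℕ) : Finset (Σ _ : ℕ, Σ _ : ℕ, ℕ) :=
  (Finset.Icc 1 r₂).sigma fun i =>
    (Finset.Icc (i + 1) r₂).sigma fun j => Finset.Ico (k i + k (j + 1)) (k i + k j)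

noncomputable def NGP (d r₂ : ℕ) (k : ℕ → ℕ) : Polynomial ℂ :=
  ∏ p ∈ Sng r₂ k, (X - C (ngRoot d p))

noncomputable def dgRoot (d : ℕ) (p : Σ _ : ℕ, ℕ) : ℂ := (d : ℂ) * ((p.1 : ℂ) - 1) / 2 - (p.2 : ℂ)

noncomputable def Sdg (r₂ : ℕ) (k : ℕ → ℕ) : Finset (Σ _ : ℕ, ℕ) :=
  (Finset.Icc 1 r₂).sigma fun a => Finset.Ico (phi1 r₂ k a) (k a + k (a + 1))

noncomputable def DGP (d r₂ : ℕ) (k : ℕ → ℕ) : Polynomial ℂ :=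
  ∏ p ∈ Sdg r₂ k, (X - C (dgRoot d p))

noncomputable def OffP (d r₂ : ℕ) (k : ℕ → ℕ) : Polynomial ℂ :=
  ∏ i ∈ Finset.Icc 1 r₂, ∏ j ∈ Finset.Icc (i + 1) r₂,
    pochPoly ((d : ℂ) * ((i : ℂ) + (j : ℂ) - 2) / 4) (k i + k (j + 1))

lemma NGP_eq (d r₂ : ℕ) (k : ℕ → ℕ) :
    NGP d r₂ k = ∏ i ∈ Finset.Icc 1 r₂, ∏ j ∈ Finset.Icc (i + 1) r₂,
      ∏ t ∈ Finset.Ico (k i + k (j + 1)) (k i + k j),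
        (X - C ((d : ℂ) * ((i : ℂ) + (j : ℂ) - 2) / 4 - (t : ℂ))) := by
  rw [NGP, Sng, Finset.prod_sigma]
  refine Finset.prod_congr rfl fun i _ => ?_
  rw [Finset.prod_sigma]
  exact Finset.prod_congr rfl fun j _ => Finset.prod_congr rfl fun t _ => by simp [ngRoot]

lemma denom1_split (d r₂ : ℕ) (k : ℕ → ℕ) (hr₂ : 0 < r₂) :
    denom1 d r₂ k = DiagP d r₂ k * OffP d r₂ k := by
  unfold denom1 DiagP OffP
  rw [← Finset.Ico_add_one_right_eq_Icc 1 (r₂ + 1), Finset.prod_Ico_succ_top (by omega),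
    show Finset.Icc (r₂ + 1 + 1) (r₂ + 1) = ∅ from Finset.Icc_eq_empty (by omega),
    Finset.prod_empty, mul_one, Finset.Ico_add_one_right_eq_Icc, ← Finset.prod_mul_distrib]
  refine Finset.prod_congr rfl fun i hi => ?_
  have hi' : 1 ≤ i ∧ i ≤ r₂ := Finset.mem_Icc.mp hi
  rw [← Finset.Ico_add_one_right_eq_Icc (i + 1) (r₂ + 1), Finset.prod_eq_prod_Ico_succ_bot (by omega)]
  congr 1
  · congr 1
    push_cast
    ring
  · refine Finset.prod_nbij' (fun j => j - 1) (fun j => j + 1) ?_ ?_ ?_ ?_ ?_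
    · intro a ha
      simp only [Finset.mem_Ico] at ha
      simp only [Finset.mem_Icc]
      omega
    · intro a ha
      simp only [Finset.mem_Icc] at ha
      simp only [Finset.mem_Ico]
      omega
    · intro a ha
      simp only [Finset.mem_Ico] at ha
      show a - 1 + 1 = a
      omega
    · intro a _
      show a + 1 - 1 = a
      omega
    · intro a ha
      simp only [Finset.mem_Ico] at ha
      have h1 : a - 1 + 1 = a := by omega
      rw [h1]
      congr 1
      have h2 : ((a - 1 : ℕ) : ℂ) = (a : ℂ) - 1 := by
        have : (1:ℕ) ≤ a := by omega
        push_cast [Nat.cast_sub this]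
        ring
      rw [h2]
      ring

lemma off_mul_NGP (d r₂ : ℕ) (k : ℕ → ℕ) (hk : ∀ i j, 1 ≤ i → i ≤ j → j ≤ r₂ → k j ≤ k i)
    (hk0 : k (r₂ + 1) = 0) :
    OffP d r₂ k * NGP d r₂ k = numer1 d r₂ k := by
  rw [NGP_eq, OffP, numer1, ← Finset.prod_mul_distrib]
  refine Finset.prod_congr rfl fun i hi => ?_
  rw [← Finset.prod_mul_distrib]
  refine Finset.prod_congr rfl fun j hj => ?_
  have hj' : i + 1 ≤ j ∧ j ≤ r₂ := Finset.mem_Icc.mp hj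
  have hi' : 1 ≤ i ∧ i ≤ r₂ := Finset.mem_Icc.mp hi
  have hle : k (j + 1) ≤ k j := by
    rcases eq_or_lt_of_le hj'.2 with h | h
    · rw [h, hk0]; exact Nat.zero_le _
    · exact hk j (j + 1) (by omega) (by omega) (by omega)
  exact pochPoly_fill _ (by omega)

lemma phiPoly_mul_DGP (d r₂ : ℕ) (k : ℕ → ℕ) :
    phiPoly1 d r₂ k * DGP d r₂ k = DiagP d r₂ k := by
  rw [DGP, Sdg, Finset.prod_sigma, phiPoly1, DiagP, ← Finset.prod_mul_distrib]
  refine Finset.prod_congr rfl fun a ha => ?_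
  have ha' : 1 ≤ a ∧ a ≤ r₂ := Finset.mem_Icc.mp ha
  have hle : phi1 r₂ k a ≤ k a + k (a + 1) :=
    Nat.sInf_le ⟨a, a + 1, ha'.1, by omega, by omega, by omega, rfl⟩
  exact pochPoly_fill _ hle

lemma key_identity (d r₂ : ℕ) (k : ℕ → ℕ) (hr₂ : 0 < r₂)
    (hk : ∀ i j, 1 ≤ i → i ≤ j → j ≤ r₂ → k j ≤ k i) (hk0 : k (r₂ + 1) = 0) :
    denom1 d r₂ k * NGP d r₂ k = DiagP d r₂ k * numer1 d r₂ k := by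
  rw [denom1_split d r₂ k hr₂, mul_assoc, off_mul_NGP d r₂ k hk hk0]

lemma denom1_ne_zero (d r₂ : ℕ) (k : ℕ → ℕ) : denom1 d r₂ k ≠ 0 :=
  Finset.prod_ne_zero_iff.mpr fun i _ =>
    Finset.prod_ne_zero_iff.mpr fun j _ => pochPoly_ne_zero _ _

lemma NGP_ne_zero (d r₂ : ℕ) (k : ℕ → ℕ) : NGP d r₂ k ≠ 0 :=
  Finset.prod_ne_zero_iff.mpr fun p _ => Polynomial.X_sub_C_ne_zero _

lemma DGP_ne_zero (d r₂ : ℕ) (k : ℕ → ℕ) : DGP d r₂ k ≠ 0 :=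
  Finset.prod_ne_zero_iff.mpr fun p _ => Polynomial.X_sub_C_ne_zero _

lemma DiagP_ne_zero (d r₂ : ℕ) (k : ℕ → ℕ) : DiagP d r₂ k ≠ 0 :=
  Finset.prod_ne_zero_iff.mpr fun a _ => pochPoly_ne_zero _ _

lemma numer1_ne_zero (d r₂ : ℕ) (k : ℕ → ℕ) : numer1 d r₂ k ≠ 0 :=
  Finset.prod_ne_zero_iff.mpr fun i _ =>
    Finset.prod_ne_zero_iff.mpr fun j _ => pochPoly_ne_zero _ _


set_option maxHeartbeats 1000000 in
/-- Proposition 6.4(2): location of the zeros of `(λ)_{φ₁(k),d}·C₁^{d,d/2}(λ,k)`,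
and the poles/nonvanishing of `C₁^{d,d/2}` at `λ = dm/2`, `d(m−1)/2`. -/
theorem zeroes_simple₁ (d r₂ : ℕ) (hd : 0 < d) (hr₂ : 0 < r₂)
    (k : ℕ → ℕ) (hk : ∀ i j, 1 ≤ i → i ≤ j → j ≤ r₂ → k j ≤ k i)
    (hk0 : k (r₂ + 1) = 0)
    (m₁ m₂ : ℕ) (hm1 : 2 ≤ m₁) (hm2 : m₁ ≤ m₂) (hm3 : m₂ ≤ r₂)
    (hkc : ∀ a, 2 ≤ a → a ≤ m₁ → k a = k 2) (hk2 : k (m₂ + 1) = 0)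
    (R : Polynomial ℂ)
    (hR : R * denom1 d r₂ k = phiPoly1 d r₂ k * numer1 d r₂ k) :
    ((k 2 < k 1 → 0 < k 2 → ∀ z : ℂ, R.IsRoot z → z.im = 0 ∧
        (d : ℝ) / 4 * ((m₁ : ℝ) - 1) - ((k 1 : ℝ) + (k 2 : ℝ)) + 1 ≤ z.re ∧
        z.re ≤ (d : ℝ) / 4 * (2 * (m₂ : ℝ) - 3) - (k (m₂ - 1) : ℝ)) ∧
      (k 1 = k 2 → 0 < k 2 → ∀ z : ℂ, R.IsRoot z → z.im = 0 ∧
        (d : ℝ) / 4 * (2 * (((m₁ + 1) / 2 : ℕ) : ℝ) - 1) - ((k 1 : ℝ) + (k 2 : ℝ)) + 1 ≤ z.re ∧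
        z.re ≤ (d : ℝ) / 4 * (2 * (m₂ : ℝ) - 3) - (k (m₂ - 1) : ℝ)) ∧
      (k 2 = 0 → R = 1)) ∧
    ∀ m : ℕ, 1 ≤ m → m ≤ r₂ - 1 →
      phi1 r₂ k (m + 1) = 0 → phi1 r₂ k m ≠ 0 →
      (Polynomial.rootMultiplicity ((d : ℂ) * (m : ℂ) / 2) (numer1 d r₂ k) =
        Polynomial.rootMultiplicity ((d : ℂ) * (m : ℂ) / 2) (denom1 d r₂ k) ∧
       Polynomial.rootMultiplicity ((d : ℂ) * ((m : ℂ) - 1) / 2) (numer1 d r₂ k) <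
        Polynomial.rootMultiplicity ((d : ℂ) * ((m : ℂ) - 1) / 2) (denom1 d r₂ k)) := by
  classical
  have hr2' : 2 ≤ r₂ := le_trans hm1 (le_trans hm2 hm3)
  have hden := denom1_ne_zero d r₂ k
  have hNG0 := NGP_ne_zero d r₂ k
  have hDG0 := DGP_ne_zero d r₂ k
  have hDiag0 := DiagP_ne_zero d r₂ k
  have hnum0 := numer1_ne_zero d r₂ k
  have hkey := key_identity d r₂ k hr₂ hk hk0
  have hdiagDG := phiPoly_mul_DGP d r₂ k
  have hRDG : R * DGP d r₂ k = NGP d r₂ k := by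
    apply mul_right_cancel₀ hden
    linear_combination DGP d r₂ k * hR + numer1 d r₂ k * hdiagDG - hkey
  have hR0 : R ≠ 0 := fun h => hNG0 (by rw [← hRDG, h, zero_mul])
  have hkz : ∀ j, m₂ + 1 ≤ j → j ≤ r₂ + 1 → k j = 0 := by
    intro j h1 h2
    rcases eq_or_lt_of_le h2 with h | h
    · rw [h]; exact hk0
    · have := hk (m₂ + 1) j (by omega) h1 (by omega)
      omega
  -- witness extraction for roots of R
  have hwit : ∀ z : ℂ, R.IsRoot z → ∃ i j t : ℕ,
      (1 ≤ i ∧ i < j ∧ j ≤ r₂ ∧ k i + k (j + 1) ≤ t ∧ t < k i + k j) ∧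
      z = (d : ℂ) * ((i : ℂ) + (j : ℂ) - 2) / 4 - (t : ℂ) := by
    intro z hz
    have hz' : Polynomial.eval z R = 0 := hz
    have h0 : Polynomial.eval z (NGP d r₂ k) = 0 := by
      rw [← hRDG, Polynomial.eval_mul, hz', zero_mul]
    rw [NGP, Polynomial.eval_prod] at h0
    obtain ⟨p, hp, he⟩ := Finset.prod_eq_zero_iff.mp h0
    obtain ⟨i, j, t⟩ := p
    simp only [Sng, Finset.mem_sigma, Finset.mem_Icc, Finset.mem_Ico] at hp
    simp only [Polynomial.eval_sub, Polynomial.eval_X, Polynomial.eval_C, sub_eq_zero,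
      ngRoot] at he
    exact ⟨i, j, t, by omega, he⟩
  -- common bounds for witnesses
  have hbound : ∀ i j t : ℕ,
      1 ≤ i → i < j → j ≤ r₂ → k i + k (j + 1) ≤ t → t < k i + k j →
      ∀ z : ℂ, z = (d : ℂ) * ((i : ℂ) + (j : ℂ) - 2) / 4 - (t : ℂ) →
      z.im = 0 ∧
      (d : ℝ) / 4 * ((m₁ : ℝ) - 1) - ((k 1 : ℝ) + (k 2 : ℝ)) + 1 ≤ z.re ∧
      z.re ≤ (d : ℝ) / 4 * (2 * (m₂ : ℝ) - 3) - (k (m₂ - 1) : ℝ) := by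
    intro i j t h1 h2 h3 h4 h5 z hzeq
    have hjm2 : j ≤ m₂ := by
      by_contra h
      have hj0 : k j = 0 := hkz j (by omega) (by omega)
      have hj10 : k (j + 1) = 0 := hkz (j + 1) (by omega) (by omega)
      omega
    have hjm1 : m₁ ≤ j := by
      by_contra h
      have e1 : k j = k 2 := hkc j (by omega) (by omega)
      have e2 : k (j + 1) = k 2 := hkc (j + 1) (by omega) (by omega)
      omega
    have hki1 : k i ≤ k 1 := hk 1 i (by omega) (by omega) (by omega)
    have hkj2 : k j ≤ k 2 := hk 2 j (by omega) (by omega) (by omega)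
    have hkim : k (m₂ - 1) ≤ k i := hk i (m₂ - 1) (by omega) (by omega) (by omega)
    have hzr : z = (((d : ℝ) * ((i : ℝ) + (j : ℝ) - 2) / 4 - (t : ℝ) : ℝ) : ℂ) := by
      rw [hzeq]; push_cast; ring
    have hre : z.re = (d : ℝ) * ((i : ℝ) + (j : ℝ) - 2) / 4 - (t : ℝ) := by
      rw [hzr, Complex.ofReal_re]
    have hd0 : (0 : ℝ) ≤ (d : ℝ) := by positivity
    refine ⟨by rw [hzr]; exact Complex.ofReal_im _, ?_, ?_⟩
    · have f1 : ((m₁ : ℝ) - 1) ≤ (i : ℝ) + (j : ℝ) - 2 := by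
        have : m₁ + 1 ≤ i + j := by omega
        have := (Nat.cast_le (α := ℝ)).mpr this
        push_cast at this
        linarith
      have f2 : (d : ℝ) * ((m₁ : ℝ) - 1) ≤ (d : ℝ) * ((i : ℝ) + (j : ℝ) - 2) :=
        mul_le_mul_of_nonneg_left f1 hd0
      have f3 : (t : ℝ) + 1 ≤ (k 1 : ℝ) + (k 2 : ℝ) := by
        have : t + 1 ≤ k 1 + k 2 := by omega
        have := (Nat.cast_le (α := ℝ)).mpr this
        push_cast at this
        linarith
      rw [hre]; linarith
    · have g1 : (i : ℝ) + (j : ℝ) - 2 ≤ 2 * (m₂ : ℝ) - 3 := by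
        have : i + j + 1 ≤ 2 * m₂ := by omega
        have := (Nat.cast_le (α := ℝ)).mpr this
        push_cast at this
        linarith
      have g2 : (d : ℝ) * ((i : ℝ) + (j : ℝ) - 2) ≤ (d : ℝ) * (2 * (m₂ : ℝ) - 3) :=
        mul_le_mul_of_nonneg_left g1 hd0
      have g3 : (k (m₂ - 1) : ℝ) ≤ (t : ℝ) := by
        have : k (m₂ - 1) ≤ t := by omega
        exact_mod_cast this
      rw [hre]; linarith
  constructor
  · refine ⟨?_, ?_, ?_⟩
    · -- case k 2 < k 1
      intro _ _ z hz
      obtain ⟨i, j, t, ⟨h1, h2, h3, h4, h5⟩, hzeq⟩ := hwit z hz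
      exact hbound i j t h1 h2 h3 h4 h5 z hzeq
    · -- case k 1 = k 2
      intro hk12 _ z hz
      rcases Nat.even_or_odd m₁ with ⟨c, hc⟩ | ⟨c, hc⟩
      · -- even m₁ : same bound as general
        obtain ⟨i, j, t, ⟨h1, h2, h3, h4, h5⟩, hzeq⟩ := hwit z hz
        obtain ⟨him, hlo, hup⟩ := hbound i j t h1 h2 h3 h4 h5 z hzeq
        have hdiv : ((m₁ + 1) / 2 : ℕ) = c := by omega
        have hcast : 2 * ((((m₁ + 1) / 2 : ℕ)) : ℝ) - 1 = (m₁ : ℝ) - 1 := by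
          rw [hdiv]
          have : (m₁ : ℝ) = 2 * (c : ℝ) := by exact_mod_cast congrArg (Nat.cast (R := ℝ)) (by omega : m₁ = 2 * c)
          linarith
        rw [hcast]
        exact ⟨him, hlo, hup⟩
      · -- odd m₁ = 2c+1
        have hc1 : 1 ≤ c := by omega
        obtain ⟨i, j, t, ⟨h1, h2, h3, h4, h5⟩, hzeq⟩ := hwit z hz
        obtain ⟨him, _, hup⟩ := hbound i j t h1 h2 h3 h4 h5 z hzeq
        have hdiv : ((m₁ + 1) / 2 : ℕ) = c + 1 := by omega
        rw [hdiv]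
        refine ⟨him, ?_, hup⟩
        -- lower bound : by contradiction
        by_contra hlt
        push_neg at hlt
        have hLdef : (d : ℝ) / 4 * (2 * ((c + 1 : ℕ) : ℝ) - 1) - ((k 1 : ℝ) + (k 2 : ℝ)) + 1
            = (d : ℝ) / 4 * (m₁ : ℝ) - ((k 1 : ℝ) + (k 2 : ℝ)) + 1 := by
          have h' : (m₁ : ℝ) = 2 * (c : ℝ) + 1 := by exact_mod_cast congrArg (Nat.cast (R := ℝ)) hc
          rw [h', show ((c + 1 : ℕ) : ℝ) = (c : ℝ) + 1 by push_cast; ring]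
          ring
        rw [hLdef] at hlt
        have hd0 : (0 : ℝ) ≤ (d : ℝ) := by positivity
        -- every witness of z must be (1, m₁, ·)
        have hforce : ∀ i' j' t' : ℕ,
            1 ≤ i' → i' < j' → j' ≤ r₂ → k i' + k (j' + 1) ≤ t' → t' < k i' + k j' →
            z = (d : ℂ) * ((i' : ℂ) + (j' : ℂ) - 2) / 4 - (t' : ℂ) →
            i' = 1 ∧ j' = m₁ := by
          intro i' j' t' g1 g2 g3 g4 g5 gzeq
          have hjm1 : m₁ ≤ j' := by
            by_contra h
            have e1 : k j' = k 2 := hkc j' (by omega) (by omega)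
            have e2 : k (j' + 1) = k 2 := hkc (j' + 1) (by omega) (by omega)
            omega
          have hki2 : k i' ≤ k 2 := by
            rcases eq_or_lt_of_le g1 with h | h
            · rw [← h, ← hk12]
            · exact hk 2 i' (by omega) (by omega) (by omega)
          have hkj2 : k j' ≤ k 2 := hk 2 j' (by omega) (by omega) (by omega)
          have hre' : z.re = (d : ℝ) * ((i' : ℝ) + (j' : ℝ) - 2) / 4 - (t' : ℝ) := by
            have : z = (((d : ℝ) * ((i' : ℝ) + (j' : ℝ) - 2) / 4 - (t' : ℝ) : ℝ) : ℂ) := by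
              rw [gzeq]; push_cast; ring
            rw [this, Complex.ofReal_re]
          by_contra hcon
          have hsum : m₁ + 2 ≤ i' + j' := by omega
          have f1 : (m₁ : ℝ) ≤ (i' : ℝ) + (j' : ℝ) - 2 := by
            have := (Nat.cast_le (α := ℝ)).mpr hsum
            push_cast at this
            linarith
          have f2 : (d : ℝ) * (m₁ : ℝ) ≤ (d : ℝ) * ((i' : ℝ) + (j' : ℝ) - 2) :=
            mul_le_mul_of_nonneg_left f1 hd0
          have f3 : (t' : ℝ) + 1 ≤ (k 1 : ℝ) + (k 2 : ℝ) := by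
            have : t' + 1 ≤ k 1 + k 2 := by omega
            have := (Nat.cast_le (α := ℝ)).mpr this
            push_cast at this
            linarith
          rw [hre'] at hlt
          linarith
        obtain ⟨hi1, hjm⟩ := hforce i j t h1 h2 h3 h4 h5 hzeq
        subst hi1
        rw [hjm] at hzeq h2 h3 h4 h5
        -- uniqueness of the witness
        have hpmem : (⟨1, m₁, t⟩ : Σ _ : ℕ, Σ _ : ℕ, ℕ) ∈ Sng r₂ k := by
          simp only [Sng, Finset.mem_sigma, Finset.mem_Icc, Finset.mem_Ico]
          omega
        have hzroot : z = ngRoot d ⟨1, m₁, t⟩ := by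
          rw [hzeq]
          simp [ngRoot]
        have huniq : ∀ q ∈ Sng r₂ k, z = ngRoot d q → q = ⟨1, m₁, t⟩ := by
          rintro ⟨i', j', t'⟩ hq hzq
          simp only [Sng, Finset.mem_sigma, Finset.mem_Icc, Finset.mem_Ico] at hq
          have hzq' : z = (d : ℂ) * ((i' : ℂ) + (j' : ℂ) - 2) / 4 - (t' : ℂ) := hzq
          obtain ⟨e1, e2⟩ := hforce i' j' t' (by omega) (by omega) (by omega) (by omega)
            (by omega) hzq'
          rw [e1, e2] at hzq'
          have htc : (t' : ℂ) = (t : ℂ) := by linear_combination hzq' - hzeq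
          have htt' : t' = t := by exact_mod_cast htc
          rw [e1, e2, htt']
        -- rootMultiplicity of NGP at z is 1
        have hsplit : NGP d r₂ k =
            (X - C z) * ∏ q ∈ (Sng r₂ k).erase ⟨1, m₁, t⟩, (X - C (ngRoot d q)) := by
          rw [NGP, ← Finset.mul_prod_erase _ _ hpmem, ← hzroot]
        have hrest0 : (∏ q ∈ (Sng r₂ k).erase ⟨1, m₁, t⟩, (X - C (ngRoot d q))) ≠ 0 :=
          Finset.prod_ne_zero_iff.mpr fun q _ => Polynomial.X_sub_C_ne_zero _
        have hrestroot : ¬ (∏ q ∈ (Sng r₂ k).erase ⟨1, m₁, t⟩,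
            (X - C (ngRoot d q))).IsRoot z := by
          intro h
          rw [Polynomial.IsRoot, Polynomial.eval_prod] at h
          obtain ⟨q, hq, he⟩ := Finset.prod_eq_zero_iff.mp h
          have hq' := Finset.mem_of_mem_erase hq
          have hqne := Finset.ne_of_mem_erase hq
          simp only [Polynomial.eval_sub, Polynomial.eval_X, Polynomial.eval_C,
            sub_eq_zero] at he
          exact hqne (huniq q hq' he)
        have hrm1 : Polynomial.rootMultiplicity z (NGP d r₂ k) = 1 := by
          rw [hsplit, Polynomial.rootMultiplicity_mul
            (mul_ne_zero (Polynomial.X_sub_C_ne_zero z) hrest0),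
            Polynomial.rootMultiplicity_X_sub_C_self,
            Polynomial.rootMultiplicity_eq_zero hrestroot]
        -- but rootMultiplicity of R * DGP at z is ≥ 2
        have hdgmem : (⟨c + 1, t⟩ : Σ _ : ℕ, ℕ) ∈ Sdg r₂ k := by
          simp only [Sdg, Finset.mem_sigma, Finset.mem_Icc, Finset.mem_Ico]
          have hphile : phi1 r₂ k (c + 1) ≤ k 1 + k (m₁ + 1) :=
            Nat.sInf_le ⟨1, m₁ + 1, le_refl 1, by omega, by omega, by omega, rfl⟩
          have hkc1 : k (c + 1) = k 2 := hkc (c + 1) (by omega) (by omega)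
          have hkc2 : k (c + 1 + 1) = k 2 := hkc (c + 1 + 1) (by omega) (by omega)
          have hkm1 : k m₁ = k 2 := hkc m₁ (by omega) (by omega)
          omega
        have hdgroot : (DGP d r₂ k).IsRoot z := by
          rw [DGP, Polynomial.IsRoot, Polynomial.eval_prod]
          refine Finset.prod_eq_zero hdgmem ?_
          simp only [Polynomial.eval_sub, Polynomial.eval_X, Polynomial.eval_C, sub_eq_zero]
          rw [hzroot]
          simp only [ngRoot, dgRoot]
          have : (m₁ : ℂ) = 2 * (c : ℂ) + 1 := by exact_mod_cast congrArg (Nat.cast (R := ℂ)) hc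
          push_cast
          rw [this]
          ring
        have hge2 : 2 ≤ Polynomial.rootMultiplicity z (NGP d r₂ k) := by
          rw [← hRDG, Polynomial.rootMultiplicity_mul (by rw [hRDG]; exact hNG0)]
          have a1 : 1 ≤ Polynomial.rootMultiplicity z R :=
            (Polynomial.rootMultiplicity_pos hR0).mpr hz
          have a2 : 1 ≤ Polynomial.rootMultiplicity z (DGP d r₂ k) :=
            (Polynomial.rootMultiplicity_pos hDG0).mpr hdgroot
          omega
        omega
    · -- case k 2 = 0 : R = 1
      intro h20
      have hka : ∀ a, 2 ≤ a → a ≤ r₂ + 1 → k a = 0 := by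
        intro a ha1 ha2
        rcases eq_or_lt_of_le ha2 with h | h
        · rw [h]; exact hk0
        · have := hk 2 a (by omega) ha1 (by omega)
          omega
      have hSng : Sng r₂ k = ∅ := by
        refine Finset.eq_empty_of_forall_notMem ?_
        rintro ⟨i, j, t⟩ hp
        simp only [Sng, Finset.mem_sigma, Finset.mem_Icc, Finset.mem_Ico] at hp
        have e1 : k j = 0 := hka j (by omega) (by omega)
        have e2 : k (j + 1) = 0 := hka (j + 1) (by omega) (by omega)
        omega
      have hSdg : Sdg r₂ k = ∅ := by
        refine Finset.eq_empty_of_forall_notMem ?_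
        rintro ⟨a, t⟩ hp
        simp only [Sdg, Finset.mem_sigma, Finset.mem_Icc, Finset.mem_Ico] at hp
        rcases Nat.lt_or_ge a 2 with h | h
        · -- a = 1 : phi1 1 = k 1 + k 2
          have ha1 : a = 1 := by omega
          subst ha1
          have hmem : phi1 r₂ k 1 ∈ {m : ℕ | ∃ i j : ℕ, 1 ≤ i ∧ i < j ∧ j ≤ r₂ + 1 ∧
              i + j = 2 * 1 + 1 ∧ m = k i + k j} := by
            rw [phi1]
            exact Nat.sInf_mem ⟨k 1 + k 2, 1, 2, by omega, by omega, by omega, by omega, rfl⟩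
          obtain ⟨i, j, g1, g2, g3, g4, g5⟩ := hmem
          have : i = 1 ∧ j = 2 := by omega
          obtain ⟨e1, e2⟩ := this
          subst e1 e2
          have h11 : k (1 + 1) = k 2 := rfl
          omega
        · have e1 : k a = 0 := hka a h (by omega)
          have e2 : k (a + 1) = 0 := hka (a + 1) (by omega) (by omega)
          omega
      have hN1 : NGP d r₂ k = 1 := by rw [NGP, hSng, Finset.prod_empty]
      have hD1 : DGP d r₂ k = 1 := by rw [DGP, hSdg, Finset.prod_empty]
      rw [hD1, hN1, mul_one] at hRDG
      exact hRDG
  · -- Part 2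
    intro m hma hmb hphiz hphinz
    have hmr : m + 1 ≤ r₂ := by omega
    have hkm10 : k (m + 1) = 0 := by
      have h0 : sInf {v : ℕ | ∃ i j : ℕ, 1 ≤ i ∧ i < j ∧ j ≤ r₂ + 1 ∧
          i + j = 2 * (m + 1) + 1 ∧ v = k i + k j} = 0 := hphiz
      rcases Nat.sInf_eq_zero.mp h0 with h | h
      · obtain ⟨i, j, g1, g2, g3, g4, g5⟩ := h
        have hi0 : k i = 0 := by omega
        have := hk i (m + 1) g1 (by omega) hmr
        omega
      · exfalso
        have : (k (m + 1) + k (m + 2)) ∈ {v : ℕ | ∃ i j : ℕ, 1 ≤ i ∧ i < j ∧ j ≤ r₂ + 1 ∧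
            i + j = 2 * (m + 1) + 1 ∧ v = k i + k j} :=
          ⟨m + 1, m + 2, by omega, by omega, by omega, by omega, rfl⟩
        rw [h] at this
        exact this
    have hkm : 0 < k m := by
      by_contra h
      apply hphinz
      have hle : phi1 r₂ k m ≤ k m + k (m + 1) :=
        Nat.sInf_le ⟨m, m + 1, hma, by omega, by omega, by omega, rfl⟩
      omega
    have hkz2 : ∀ j, m + 1 ≤ j → j ≤ r₂ + 1 → k j = 0 := by
      intro j h1 h2
      rcases eq_or_lt_of_le h2 with h | h
      · rw [h]; exact hk0
      · have := hk (m + 1) j (by omega) h1 (by omega)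
        omega
    have hadd : ∀ z : ℂ,
        Polynomial.rootMultiplicity z (denom1 d r₂ k) +
          Polynomial.rootMultiplicity z (NGP d r₂ k) =
        Polynomial.rootMultiplicity z (DiagP d r₂ k) +
          Polynomial.rootMultiplicity z (numer1 d r₂ k) := by
      intro z
      rw [← Polynomial.rootMultiplicity_mul (mul_ne_zero hden hNG0),
        ← Polynomial.rootMultiplicity_mul (mul_ne_zero hDiag0 hnum0), hkey]
    -- NGP has no root at dm/2 nor d(m-1)/2
    have hng1 : ¬ (NGP d r₂ k).IsRoot ((d : ℂ) * (m : ℂ) / 2) := by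
      intro h
      rw [NGP, Polynomial.IsRoot, Polynomial.eval_prod] at h
      obtain ⟨⟨i, j, t⟩, hp, he⟩ := Finset.prod_eq_zero_iff.mp h
      simp only [Sng, Finset.mem_sigma, Finset.mem_Icc, Finset.mem_Ico] at hp
      simp only [Polynomial.eval_sub, Polynomial.eval_X, Polynomial.eval_C, sub_eq_zero,
        ngRoot] at he
      have hnat : d * (i + j) = 2 * d * m + 4 * t + 2 * d := by
        have hc : (d : ℂ) * ((i : ℂ) + (j : ℂ)) = 2 * d * m + 4 * t + 2 * d := by
          linear_combination (-4 : ℂ) * he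
        exact_mod_cast hc
      have hij : 2 * m + 2 ≤ i + j := by
        refine Nat.le_of_mul_le_mul_left ?_ hd
        calc d * (2 * m + 2) = 2 * d * m + 2 * d := by ring
          _ ≤ d * (i + j) := by omega
      have e1 : k j = 0 := hkz2 j (by omega) (by omega)
      have e2 : k (j + 1) = 0 := hkz2 (j + 1) (by omega) (by omega)
      omega
    have hng2 : ¬ (NGP d r₂ k).IsRoot ((d : ℂ) * ((m : ℂ) - 1) / 2) := by
      intro h
      rw [NGP, Polynomial.IsRoot, Polynomial.eval_prod] at h
      obtain ⟨⟨i, j, t⟩, hp, he⟩ := Finset.prod_eq_zero_iff.mp h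
      simp only [Sng, Finset.mem_sigma, Finset.mem_Icc, Finset.mem_Ico] at hp
      simp only [Polynomial.eval_sub, Polynomial.eval_X, Polynomial.eval_C, sub_eq_zero,
        ngRoot] at he
      have hnat : d * (i + j) = 2 * d * m + 4 * t := by
        have hc : (d : ℂ) * ((i : ℂ) + (j : ℂ)) = 2 * d * m + 4 * t := by
          linear_combination (-4 : ℂ) * he
        exact_mod_cast hc
      have hij : 2 * m ≤ i + j := by
        refine Nat.le_of_mul_le_mul_left ?_ hd
        calc d * (2 * m) = 2 * d * m := by ring
          _ ≤ d * (i + j) := by omega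
      have e1 : k j = 0 := hkz2 j (by omega) (by omega)
      have e2 : k (j + 1) = 0 := hkz2 (j + 1) (by omega) (by omega)
      omega
    -- DiagP has no root at dm/2
    have hdg1 : ¬ (DiagP d r₂ k).IsRoot ((d : ℂ) * (m : ℂ) / 2) := by
      intro h
      rw [DiagP, Polynomial.IsRoot, Polynomial.eval_prod] at h
      obtain ⟨a, ha, he⟩ := Finset.prod_eq_zero_iff.mp h
      simp only [Finset.mem_Icc] at ha
      rw [pochPoly_eq, Polynomial.eval_prod] at he
      obtain ⟨t, ht, he2⟩ := Finset.prod_eq_zero_iff.mp he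
      simp only [Finset.mem_range] at ht
      simp only [Polynomial.eval_sub, Polynomial.eval_X, Polynomial.eval_C, sub_eq_zero] at he2
      have hnat : d * a = d * m + 2 * t + d := by
        have hc : (d : ℂ) * (a : ℂ) = d * m + 2 * t + d := by
          linear_combination (-2 : ℂ) * he2
        exact_mod_cast hc
      have hma' : m + 1 ≤ a := by
        refine Nat.le_of_mul_le_mul_left ?_ hd
        calc d * (m + 1) = d * m + d := by ring
          _ ≤ d * a := by omega
      have e1 : k a = 0 := hkz2 a (by omega) (by omega)
      have e2 : k (a + 1) = 0 := hkz2 (a + 1) (by omega) (by omega)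
      omega
    -- DiagP has rootMultiplicity 1 at d(m-1)/2
    have hdg2 : Polynomial.rootMultiplicity ((d : ℂ) * ((m : ℂ) - 1) / 2) (DiagP d r₂ k) = 1 := by
      have hmmem : m ∈ Finset.Icc 1 r₂ := Finset.mem_Icc.mpr ⟨hma, by omega⟩
      rw [DiagP, ← Finset.mul_prod_erase _ _ hmmem,
        Polynomial.rootMultiplicity_mul (mul_ne_zero (pochPoly_ne_zero _ _)
          (Finset.prod_ne_zero_iff.mpr fun a _ => pochPoly_ne_zero _ _))]
      have hrest : Polynomial.rootMultiplicity ((d : ℂ) * ((m : ℂ) - 1) / 2)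
          (∏ a ∈ (Finset.Icc 1 r₂).erase m,
            pochPoly ((d : ℂ) * ((a : ℂ) - 1) / 2) (k a + k (a + 1))) = 0 := by
        refine Polynomial.rootMultiplicity_eq_zero ?_
        intro h
        rw [Polynomial.IsRoot, Polynomial.eval_prod] at h
        obtain ⟨a, ha, he⟩ := Finset.prod_eq_zero_iff.mp h
        have hane := Finset.ne_of_mem_erase ha
        have ha' := Finset.mem_of_mem_erase ha
        simp only [Finset.mem_Icc] at ha'
        rw [pochPoly_eq, Polynomial.eval_prod] at he
        obtain ⟨t, ht, he2⟩ := Finset.prod_eq_zero_iff.mp he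
        simp only [Finset.mem_range] at ht
        simp only [Polynomial.eval_sub, Polynomial.eval_X, Polynomial.eval_C,
          sub_eq_zero] at he2
        have hnat : d * a = d * m + 2 * t := by
          have hc : (d : ℂ) * (a : ℂ) = d * m + 2 * t := by
            linear_combination (-2 : ℂ) * he2
          exact_mod_cast hc
        have hma' : m ≤ a := by
          refine Nat.le_of_mul_le_mul_left ?_ hd
          omega
        have hma2 : m + 1 ≤ a := by omega
        have e1 : k a = 0 := hkz2 a (by omega) (by omega)
        have e2 : k (a + 1) = 0 := hkz2 (a + 1) (by omega) (by omega)
        omega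
      rw [hrest]
      have hpoch : Polynomial.rootMultiplicity ((d : ℂ) * ((m : ℂ) - 1) / 2)
          (pochPoly ((d : ℂ) * ((m : ℂ) - 1) / 2) (k m + k (m + 1))) = 1 := by
        rw [pochPoly_eq, ← Finset.mul_prod_erase _ _
          (Finset.mem_range.mpr (by omega : 0 < k m + k (m + 1))),
          Polynomial.rootMultiplicity_mul (mul_ne_zero (Polynomial.X_sub_C_ne_zero _)
            (Finset.prod_ne_zero_iff.mpr fun t _ => Polynomial.X_sub_C_ne_zero _))]
        have h1 : ((d : ℂ) * ((m : ℂ) - 1) / 2 - ((0 : ℕ) : ℂ)) = (d : ℂ) * ((m : ℂ) - 1) / 2 := by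
          simp
        rw [h1, Polynomial.rootMultiplicity_X_sub_C_self]
        have h2 : Polynomial.rootMultiplicity ((d : ℂ) * ((m : ℂ) - 1) / 2)
            (∏ t ∈ (Finset.range (k m + k (m + 1))).erase 0,
              (X - C ((d : ℂ) * ((m : ℂ) - 1) / 2 - (t : ℂ)))) = 0 := by
          refine Polynomial.rootMultiplicity_eq_zero ?_
          intro h
          rw [Polynomial.IsRoot, Polynomial.eval_prod] at h
          obtain ⟨t, ht, he⟩ := Finset.prod_eq_zero_iff.mp h
          have htne := Finset.ne_of_mem_erase ht
          simp only [Polynomial.eval_sub, Polynomial.eval_X, Polynomial.eval_C,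
            sub_eq_zero] at he
          have : (t : ℂ) = 0 := by linear_combination he
          exact htne (by exact_mod_cast this)
        rw [h2]
      rw [hpoch]
    constructor
    · have h1 := hadd ((d : ℂ) * (m : ℂ) / 2)
      rw [Polynomial.rootMultiplicity_eq_zero hng1, Polynomial.rootMultiplicity_eq_zero hdg1]
        at h1
      omega
    · have h2 := hadd ((d : ℂ) * ((m : ℂ) - 1) / 2)
      rw [Polynomial.rootMultiplicity_eq_zero hng2, hdg2] at h2
      omega
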